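/- (Time-derivative bound for the instantaneous stationary distribution) If α : [0,∞) → ℝ≥0 is differentiable and H^f_t(x) = ∫_{H_min}^{H(x)} 1/(α_t f((u-c)_+)+1) du, then |d/dt μ^f_t(x)| ≤ (-α'_t) f(H_max - c) (H_max - H_min) · μ^f_t(x) whenever α'_t ≤ 0, where μ^f_t(x) = e^{-H^f_t(x)}/Z^f_t. -/

import Mathlib

open MeasureTheory

/-- Time-derivative bound for the instantaneous stationary distribution: if the penalty
`α_t` is differentiable with `α'_t ≤ 0`, then
`|d/dt μ^f_t(x)| ≤ (-α'_t) f(H_max - c) (H_max - H_min) μ^f_t(x)`. -/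
theorem instantaneous_stationary_derivative_bound {X : Type*} [Fintype X] [Nonempty X]
    (H : X → ℝ) (Hmin Hmax : ℝ)
    (hHmin : ∀ x, Hmin ≤ H x) (hmin_attain : ∃ x, H x = Hmin)
    (hHmax : ∀ x, H x ≤ Hmax) (hmax_attain : ∃ x, H x = Hmax)
    (f : ℝ → ℝ) (hf_diff : Differentiable ℝ f)
    (hf_nonneg : ∀ u, 0 ≤ u → 0 ≤ f u)
    (hf_mono : ∀ u v, 0 ≤ u → u ≤ v → f u ≤ f v) (hf0 : f 0 = 0)
    (c : ℝ) (hc : Hmin ≤ c) (hc' : c ≤ Hmax)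
    (α : ℝ → ℝ) (hα_diff : Differentiable ℝ α) (hα_nonneg : ∀ t, 0 ≤ α t)
    (Hft : ℝ → X → ℝ)
    (hHft : ∀ t x, Hft t x = ∫ u in Hmin..(H x), 1 / (α t * f (max (u - c) 0) + 1))
    (Z : ℝ → ℝ) (hZ : ∀ t, Z t = ∑ x, Real.exp (-Hft t x))
    (μft : ℝ → X → ℝ) (hμft : ∀ t x, μft t x = Real.exp (-Hft t x) / Z t)
    (t : ℝ) (ht : 0 ≤ t) (hα' : deriv α t ≤ 0) (x : X) :
    |deriv (fun s => μft s x) t|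
      ≤ (-(deriv α t)) * f (Hmax - c) * (Hmax - Hmin) * μft t x := by
  obtain ⟨xm, hxm⟩ := hmin_attain
  have hΔ : Hmin ≤ Hmax := hxm ▸ hHmax xm
  set k : ℝ → ℝ := fun u => f (max (u - c) 0) with hk
  have hk_cont : Continuous k :=
    hf_diff.continuous.comp ((continuous_id.sub continuous_const).max continuous_const)
  have hk_nonneg : ∀ u, 0 ≤ k u := fun u => hf_nonneg _ (le_max_right _ _)
  set K := f (Hmax - c) with hK
  have hK_nonneg : 0 ≤ K := hf_nonneg _ (by linarith)
  have hk_le : ∀ u, u ≤ Hmax → k u ≤ K := fun u hu =>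
    hf_mono _ _ (le_max_right _ _) (max_le (by linarith) (by linarith))
  have ha₀ : 0 ≤ α t := hα_nonneg t
  have den_pos : ∀ u, 0 < α t * k u + 1 := fun u => by nlinarith [hk_nonneg u]
  have hcont1 : Continuous (fun u => 1 / (α t * k u + 1)) :=
    continuous_const.div ((continuous_const.mul hk_cont).add continuous_const)
      (fun u => (den_pos u).ne')
  have hcont2 : Continuous (fun u => -(k u) / ((α t * k u + 1) ^ 2)) :=
    hk_cont.neg.div (((continuous_const.mul hk_cont).add continuous_const).pow 2)
      (fun u => pow_ne_zero 2 (den_pos u).ne')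
  -- derivative of the parametric integral with respect to the parameter a, at a = α t
  have key : ∀ b, Hmin ≤ b → b ≤ Hmax →
      HasDerivAt (fun a : ℝ => ∫ u in Hmin..b, 1 / (a * k u + 1))
        (∫ u in Hmin..b, -(k u) / ((α t * k u + 1) ^ 2)) (α t) := by
    intro b hb1 hb2
    set ε : ℝ := 1 / (2 * (K + 1)) with hε
    have hεpos : 0 < ε := by positivity
    have hεK : ε * K ≤ 1 / 2 := by
      rw [hε, div_mul_eq_mul_div, div_le_div_iff₀ (by positivity) (by norm_num)]
      nlinarith
    have hden : ∀ a ∈ Metric.ball (α t) ε, ∀ u, u ≤ Hmax → (1 : ℝ) / 2 ≤ a * k u + 1 := by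
      intro a ha u hu
      rw [Metric.mem_ball, Real.dist_eq] at ha
      obtain ⟨h1, h2⟩ := abs_lt.mp ha
      have h3 := hk_nonneg u
      have h4 := hk_le u hu
      nlinarith
    have hmem : ∀ u ∈ Set.uIoc Hmin b, u ≤ Hmax := by
      intro u hu
      rw [Set.uIoc_of_le hb1] at hu
      exact le_trans hu.2 hb2
    have := intervalIntegral.hasDerivAt_integral_of_dominated_loc_of_deriv_le
      (F := fun (a : ℝ) (u : ℝ) => 1 / (a * k u + 1))
      (F' := fun (a : ℝ) (u : ℝ) => -(k u) / ((a * k u + 1) ^ 2))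
      (x₀ := α t) (bound := fun _ => 4 * K) (μ := volume) (a := Hmin) (b := b)
      (Metric.ball_mem_nhds _ hεpos)
      (Filter.Eventually.of_forall fun a =>
        (measurable_const.div
          ((hk_cont.measurable.const_mul a).add measurable_const)).aestronglyMeasurable)
      (hcont1.intervalIntegrable _ _)
      ((hk_cont.measurable.neg.div
        (((hk_cont.measurable.const_mul (α t)).add measurable_const).pow_const 2)).aestronglyMeasurable)
      ?_ intervalIntegrable_const ?_
    · exact this.2
    · -- bound
      refine Filter.Eventually.of_forall fun u hu a ha => ?_
      have hd := hden a ha u (hmem u hu)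
      have hd2 : (1 : ℝ) / 4 ≤ (a * k u + 1) ^ 2 := by nlinarith
      rw [Real.norm_eq_abs, abs_div, abs_neg, abs_of_nonneg (hk_nonneg u),
        abs_of_nonneg (sq_nonneg _), div_le_iff₀ (by linarith)]
      show k u ≤ 4 * K * (a * k u + 1) ^ 2
      nlinarith [hk_le u (hmem u hu), hk_nonneg u,
        mul_nonneg hK_nonneg (sub_nonneg.mpr hd2)]
    · -- differentiability
      refine Filter.Eventually.of_forall fun u hu a ha => ?_
      have hd := hden a ha u (hmem u hu)
      have hne : a * k u + 1 ≠ 0 := by linarith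
      have h1 : HasDerivAt (fun a : ℝ => a * k u + 1) (k u) a := by
        simpa using ((hasDerivAt_id a).mul_const (k u)).add_const 1
      simpa [one_div, Pi.inv_def] using h1.inv hne
  -- derivative of s ↦ Hft s y
  set I : X → ℝ := fun y => ∫ u in Hmin..H y, -(k u) / ((α t * k u + 1) ^ 2) with hI
  set D : X → ℝ := fun y => I y * deriv α t with hD
  have hHd : ∀ y, HasDerivAt (fun s => Hft s y) (D y) t := by
    intro y
    have h1 := key (H y) (hHmin y) (hHmax y)
    have h2 : HasDerivAt α (deriv α t) t := (hα_diff t).hasDerivAt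
    have h3 := h1.comp t h2
    have heq : (fun s => Hft s y) = fun s => ∫ u in Hmin..H y, 1 / (α s * k u + 1) :=
      funext fun s => hHft s y
    rw [heq]
    simpa [Function.comp_def, hD, hI] using h3
  -- bounds on I and D
  have hI_le : ∀ y, I y ≤ 0 := by
    intro y
    have h0 : I y = -∫ u in Hmin..H y, k u / ((α t * k u + 1) ^ 2) := by
      show (∫ u in Hmin..H y, -k u / ((α t * k u + 1) ^ 2)) = _
      simp only [neg_div]
      exact intervalIntegral.integral_neg
    rw [h0, neg_nonpos]
    exact intervalIntegral.integral_nonneg (hHmin y)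
      fun u hu => div_nonneg (hk_nonneg u) (sq_nonneg _)
  have hI_ge : ∀ y, -(K * (Hmax - Hmin)) ≤ I y := by
    intro y
    have hmono : (∫ u in Hmin..H y, (-K : ℝ)) ≤ I y := by
      apply intervalIntegral.integral_mono_on (hHmin y) intervalIntegrable_const
        (hcont2.intervalIntegrable _ _)
      intro u hu
      have hu2 : u ≤ Hmax := le_trans hu.2 (hHmax y)
      have hd := den_pos u
      have hd2 : 1 ≤ (α t * k u + 1) ^ 2 := by nlinarith [mul_nonneg ha₀ (hk_nonneg u)]
      rw [neg_div, neg_le_neg_iff, div_le_iff₀ (by linarith)]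
      nlinarith [hk_le u hu2, hk_nonneg u]
    have : (∫ u in Hmin..H y, (-K : ℝ)) = (H y - Hmin) * (-K) := by
      rw [intervalIntegral.integral_const]; simp [smul_eq_mul]
    nlinarith [hHmax y, hHmin y]
  set M : ℝ := (-(deriv α t)) * K * (Hmax - Hmin) with hM
  have hD_nonneg : ∀ y, 0 ≤ D y := fun y => by
    have := hI_le y
    show 0 ≤ I y * deriv α t
    nlinarith
  have hD_le : ∀ y, D y ≤ M := by
    intro y
    have h1 := hI_ge y
    have h2 := hI_le y
    show I y * deriv α t ≤ -deriv α t * K * (Hmax - Hmin)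
    nlinarith [mul_le_mul_of_nonpos_right h1 hα']
  have hM_nonneg : 0 ≤ M := le_trans (hD_nonneg x) (hD_le x)
  -- derivative of Z and of μ
  have hE : ∀ y, HasDerivAt (fun s => Real.exp (-Hft s y)) (Real.exp (-Hft t y) * (-(D y))) t :=
    fun y => ((hHd y).neg).exp
  have hZd : HasDerivAt Z (∑ y, Real.exp (-Hft t y) * (-(D y))) t := by
    have heq : Z = fun s => ∑ y, Real.exp (-Hft s y) := funext hZ
    rw [heq]
    exact HasDerivAt.fun_sum fun y _ => hE y
  have hZpos : 0 < Z t := by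
    rw [hZ t]
    exact Finset.sum_pos (fun y _ => Real.exp_pos _) Finset.univ_nonempty
  have hμd : HasDerivAt (fun s => μft s x)
      ((Real.exp (-Hft t x) * (-(D x)) * Z t -
        Real.exp (-Hft t x) * (∑ y, Real.exp (-Hft t y) * (-(D y)))) / (Z t) ^ 2) t := by
    have heq : (fun s => μft s x) = fun s => Real.exp (-Hft s x) / Z s :=
      funext fun s => hμft s x
    rw [heq]
    exact (hE x).div hZd hZpos.ne'
  set S : ℝ := (∑ y, Real.exp (-Hft t y) * D y) / Z t with hS
  have hS_nonneg : 0 ≤ S :=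
    div_nonneg (Finset.sum_nonneg fun y _ => mul_nonneg (Real.exp_pos _).le (hD_nonneg y))
      hZpos.le
  have hS_le : S ≤ M := by
    rw [hS, div_le_iff₀ hZpos]
    calc ∑ y, Real.exp (-Hft t y) * D y
        ≤ ∑ y, Real.exp (-Hft t y) * M :=
          Finset.sum_le_sum fun y _ => mul_le_mul_of_nonneg_left (hD_le y) (Real.exp_pos _).le
      _ = M * Z t := by rw [← Finset.sum_mul, hZ t, mul_comm]
  have hVeq : (Real.exp (-Hft t x) * (-(D x)) * Z t -
        Real.exp (-Hft t x) * (∑ y, Real.exp (-Hft t y) * (-(D y)))) / (Z t) ^ 2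
      = (Real.exp (-Hft t x) / Z t) * (S - D x) := by
    rw [hS]
    have h1 : (∑ y, Real.exp (-Hft t y) * (-(D y))) = -∑ y, Real.exp (-Hft t y) * D y := by
      rw [← Finset.sum_neg_distrib]
      exact Finset.sum_congr rfl fun y _ => by ring
    rw [h1]
    field_simp
    ring
  rw [hμd.deriv, hVeq, abs_mul, abs_of_nonneg (div_nonneg (Real.exp_pos _).le hZpos.le),
    hμft t x]
  have habs : |S - D x| ≤ M := abs_le.mpr ⟨by linarith [hD_le x], by linarith [hD_nonneg x]⟩
  calc Real.exp (-Hft t x) / Z t * |S - D x|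
      ≤ Real.exp (-Hft t x) / Z t * M :=
        mul_le_mul_of_nonneg_left habs (div_nonneg (Real.exp_pos _).le hZpos.le)
    _ = M * (Real.exp (-Hft t x) / Z t) := mul_comm _ _
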